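/- arXiv:1410.7384 — 2 statements merged into one kernel-verified Lean document; each statement's English description precedes it below -/
import Mathlib

section
/- There exists an absolute constant A > 0 with the following property. Let s₀ ∈ ℂ, r > 0 and M > 1. Suppose f is analytic on an open set containing the closed disk {s ∈ ℂ : |s − s₀| ≤ r}, that f(s₀) ≠ 0, and that |f(s)| ≤ e^M · |f(s₀)| for all s with |s − s₀| ≤ r. Then for every s with |s − s₀| ≤ r/4 at which f(s) ≠ 0 one has |f′(s)/f(s) − Σ_ρ m_ρ/(s − ρ)| < A·M/r, where the sum runs over the zeros ρ of f with |ρ − s₀| ≤ r/2 and m_ρ denotes the order of the zero ρ. -/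
open Complex Filter

/-- The order (multiplicity) of a zero `z` of an analytic function `f`: the unique `m ∈ ℕ`
such that `f s = (s - z) ^ m * g s` near `z` with `g` analytic at `z` and `g z ≠ 0`. -/
noncomputable def zeroOrder (f : ℂ → ℂ) (z : ℂ) : ℕ :=
  sInf {m : ℕ | ∃ g : ℂ → ℂ, AnalyticAt ℂ g z ∧ g z ≠ 0 ∧
    ∀ᶠ w in nhds z, f w = (w - z) ^ m * g w}

open Metric

lemma zeroOrder_eq {f : ℂ → ℂ} {z : ℂ} {m : ℕ} {g : ℂ → ℂ}
    (hg : AnalyticAt ℂ g z) (hgz : g z ≠ 0)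
    (hfg : ∀ᶠ w in nhds z, f w = (w - z) ^ m * g w) : zeroOrder f z = m := by
  have hf : AnalyticAt ℂ f z := by
    have : AnalyticAt ℂ (fun w => (w - z) ^ m * g w) z :=
      (((analyticAt_id).sub analyticAt_const).pow m).mul hg
    exact this.congr (EventuallyEq.symm hfg)
  have horder : analyticOrderAt f z = (m : ℕ∞) := by
    rw [hf.analyticOrderAt_eq_natCast]
    exact ⟨g, hg, hgz, by simpa [smul_eq_mul] using hfg⟩
  have hset : {n : ℕ | ∃ g : ℂ → ℂ, AnalyticAt ℂ g z ∧ g z ≠ 0 ∧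
      ∀ᶠ w in nhds z, f w = (w - z) ^ n * g w} = {m} := by
    ext n
    simp only [Set.mem_setOf_eq, Set.mem_singleton_iff]
    constructor
    · rintro ⟨g', hg', hg'z, hfg'⟩
      have : analyticOrderAt f z = (n : ℕ∞) := by
        rw [hf.analyticOrderAt_eq_natCast]
        exact ⟨g', hg', hg'z, by simpa [smul_eq_mul] using hfg'⟩
      have := horder.symm.trans this
      exact_mod_cast this.symm
    · rintro rfl; exact ⟨g, hg, hgz, hfg⟩
  rw [zeroOrder, hset, csInf_singleton]

/-- Divide out a single zero globally. -/
lemma divide_once {V : Set ℂ} (hV : IsOpen V) {f : ℂ → ℂ} (hf : AnalyticOnNhd ℂ f V)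
    {ρ : ℂ} {m : ℕ} {g0 : ℂ → ℂ} (hg0 : AnalyticAt ℂ g0 ρ) (hg0z : g0 ρ ≠ 0)
    (hfac : ∀ᶠ w in nhds ρ, f w = (w - ρ) ^ m * g0 w) (hfρ : f ρ = 0) :
    ∃ g : ℂ → ℂ, AnalyticOnNhd ℂ g V ∧ g ρ ≠ 0 ∧
      (∀ s : ℂ, f s = (s - ρ) ^ m * g s) ∧
      (∀ w : ℂ, w ≠ ρ → g w = f w / (w - ρ) ^ m) := by
  have hm : m ≠ 0 := by
    rintro rfl
    have := hfac.self_of_nhds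
    simp only [pow_zero, one_mul] at this
    exact hg0z (this ▸ hfρ)
  set g : ℂ → ℂ := Function.update (fun w => f w / (w - ρ) ^ m) ρ (g0 ρ) with hgdef
  have hne : ∀ w : ℂ, w ≠ ρ → g w = f w / (w - ρ) ^ m := by
    intro w hw; simp [hgdef, Function.update_of_ne hw]
  have heq : g =ᶠ[nhds ρ] g0 := by
    filter_upwards [hfac] with w hw
    by_cases h : w = ρ
    · subst h; simp [hgdef]
    · rw [hne w h, hw, mul_comm, mul_div_assoc, div_self (pow_ne_zero _ (sub_ne_zero.2 h)), mul_one]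
  refine ⟨g, ?_, ?_, ?_, hne⟩
  · intro x hx
    by_cases h : x = ρ
    · subst h; exact hg0.congr heq.symm
    · have h1 : AnalyticAt ℂ (fun w => f w / (w - ρ) ^ m) x :=
        (hf x hx).div (((analyticAt_id).sub analyticAt_const).pow m)
          (pow_ne_zero _ (sub_ne_zero.2 h))
      refine h1.congr ?_
      have hopen : IsOpen {w : ℂ | w ≠ ρ} := isOpen_ne
      filter_upwards [hopen.mem_nhds h] with w hw
      exact (hne w hw).symm
  · simp [hgdef, hg0z]
  · intro s
    by_cases h : s = ρ
    · subst h; simp [hfρ, zero_pow hm]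
    · rw [hne s h, mul_comm, div_mul_cancel₀]
      exact pow_ne_zero _ (sub_ne_zero.2 h)

lemma factor_finset {V : Set ℂ} (hV : IsOpen V) (T : Finset ℂ) :
    ∀ f : ℂ → ℂ, AnalyticOnNhd ℂ f V → (∀ ρ ∈ T, f ρ = 0) →
    (∀ ρ ∈ T, ∃ m : ℕ, ∃ g0 : ℂ → ℂ, AnalyticAt ℂ g0 ρ ∧ g0 ρ ≠ 0 ∧
      ∀ᶠ w in nhds ρ, f w = (w - ρ) ^ m * g0 w) →
    ∃ F : ℂ → ℂ, AnalyticOnNhd ℂ F V ∧ (∀ ρ ∈ T, F ρ ≠ 0) ∧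
      ∀ s : ℂ, f s = (∏ ρ ∈ T, (s - ρ) ^ (zeroOrder f ρ)) * F s := by
  induction T using Finset.induction_on with
  | empty =>
    intro f hf _ _
    exact ⟨f, hf, by simp, by simp⟩
  | insert ρ₀ T' hρ₀ ih =>
    intro f hf hz hw
    obtain ⟨m₀, g0, hg0, hg0z, hfac⟩ := hw ρ₀ (Finset.mem_insert_self _ _)
    have hfρ₀ : f ρ₀ = 0 := hz ρ₀ (Finset.mem_insert_self _ _)
    have hord₀ : zeroOrder f ρ₀ = m₀ := zeroOrder_eq hg0 hg0z hfac
    obtain ⟨g, hg, hgρ₀, hgfac, hgne⟩ := divide_once hV hf hg0 hg0z hfac hfρ₀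
    -- witnesses for g at points of T'
    have hwit : ∀ ρ ∈ T', ∃ m : ℕ, ∃ g0' : ℂ → ℂ, AnalyticAt ℂ g0' ρ ∧ g0' ρ ≠ 0 ∧
        (∀ᶠ w in nhds ρ, g w = (w - ρ) ^ m * g0' w) ∧ zeroOrder f ρ = m := by
      intro ρ hρ
      have hρne : ρ ≠ ρ₀ := fun h => hρ₀ (h ▸ hρ)
      obtain ⟨mρ, gρ, hgρ, hgρz, hfacρ⟩ := hw ρ (Finset.mem_insert_of_mem hρ)
      refine ⟨mρ, fun w => gρ w / (w - ρ₀) ^ m₀, ?_, ?_, ?_, zeroOrder_eq hgρ hgρz hfacρ⟩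
      · exact hgρ.div (((analyticAt_id).sub analyticAt_const).pow m₀)
          (pow_ne_zero _ (sub_ne_zero.2 hρne))
      · exact div_ne_zero hgρz (pow_ne_zero _ (sub_ne_zero.2 hρne))
      · filter_upwards [hfacρ, isOpen_ne.mem_nhds hρne] with w hw1 (hw2 : w ≠ ρ₀)
        rw [hgne w hw2, hw1, mul_div_assoc]
    have hgz : ∀ ρ ∈ T', g ρ = 0 := by
      intro ρ hρ
      have hρne : ρ ≠ ρ₀ := fun h => hρ₀ (h ▸ hρ)
      rw [hgne ρ hρne, hz ρ (Finset.mem_insert_of_mem hρ), zero_div]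
    obtain ⟨F, hF, hFz, hFfac⟩ := ih g hg hgz (fun ρ hρ => by
      obtain ⟨m, g0', h1, h2, h3, _⟩ := hwit ρ hρ; exact ⟨m, g0', h1, h2, h3⟩)
    have hords : ∀ ρ ∈ T', zeroOrder g ρ = zeroOrder f ρ := by
      intro ρ hρ
      obtain ⟨m, g0', h1, h2, h3, h4⟩ := hwit ρ hρ
      rw [zeroOrder_eq h1 h2 h3, h4]
    refine ⟨F, hF, ?_, ?_⟩
    · intro ρ hρ
      rcases Finset.mem_insert.1 hρ with rfl | hρ'
      · intro hF0
        apply hgρ₀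
        rw [hFfac ρ, hF0, mul_zero]
      · exact hFz ρ hρ'
    · intro s
      rw [Finset.prod_insert hρ₀, hord₀, mul_assoc, hgfac s, hFfac s]
      congr 2
      exact Finset.prod_congr rfl fun ρ hρ => by rw [hords ρ hρ]

lemma zeros_finite {f : ℂ → ℂ} {s₀ : ℂ} {R r' : ℝ} (hr' : 0 ≤ r') (hR : r' < R)
    (hf : AnalyticOnNhd ℂ f (ball s₀ R)) (hf0 : f s₀ ≠ 0) :
    {ρ : ℂ | ‖ρ - s₀‖ ≤ r' ∧ f ρ = 0}.Finite ∧
    (∀ z ∈ ball s₀ R, ¬ (∀ᶠ w in nhds z, f w = 0)) := by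
  have hs₀R : (0:ℝ) < R := lt_of_le_of_lt hr' hR
  have hnz : ∀ z ∈ ball s₀ R, ¬ (∀ᶠ w in nhds z, f w = 0) := by
    intro z hz hev
    have : Set.EqOn f 0 (ball s₀ R) :=
      hf.eqOn_zero_of_preconnected_of_eventuallyEq_zero
        (convex_ball s₀ R).isPreconnected hz hev
    exact hf0 (this (mem_ball_self hs₀R))
  refine ⟨?_, hnz⟩
  set Z := {ρ : ℂ | ‖ρ - s₀‖ ≤ r' ∧ f ρ = 0} with hZ
  have hZK : Z ⊆ closedBall s₀ r' := by
    intro ρ hρ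
    simpa [Metric.mem_closedBall, dist_eq, hρ.1] using hρ.1
  have hKball : closedBall s₀ r' ⊆ ball s₀ R := closedBall_subset_ball hR
  have hE : ∀ z ∈ closedBall s₀ r', {w : ℂ | f w ≠ 0 ∨ w = z} ∈ nhds z := by
    intro z hz
    have hA : AnalyticAt ℂ f z := hf z (hKball hz)
    by_cases h0 : f z = 0
    · have := hA.eventually_eq_zero_or_eventually_ne_zero.resolve_left (hnz z (hKball hz))
      rw [eventually_nhdsWithin_iff] at this
      filter_upwards [this] with w hw
      by_cases hwz : w = z
      · exact Or.inr hwz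
      · exact Or.inl (hw hwz)
    · have : ∀ᶠ w in nhds z, f w ≠ 0 := hA.continuousAt.eventually_ne h0
      filter_upwards [this] with w hw using Or.inl hw
  obtain ⟨t, _, hcov⟩ := (isCompact_closedBall s₀ r').elim_nhds_subcover _ hE
  apply Set.Finite.subset t.finite_toSet
  intro ρ hρ
  have := hcov (hZK hρ)
  simp only [Set.mem_iUnion] at this
  obtain ⟨x, hx, hmem⟩ := this
  rcases hmem with h | h
  · exact absurd hρ.2 h
  · simpa [h] using hx

lemma borel_caratheodory_deriv {h : ℂ → ℂ} {s₀ : ℂ} {R M : ℝ} (hR : 0 < R)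
    (hd : DifferentiableOn ℂ h (ball s₀ R)) (h0 : h s₀ = 0) (hM : 0 < M)
    (hre : ∀ z ∈ ball s₀ R, (h z).re ≤ M) :
    ∀ s ∈ closedBall s₀ (R/2), ‖deriv h s‖ ≤ (12*(M+1)+1)*4/R := by
  set M' : ℝ := M + 1 with hM'
  have hM'pos : 0 < M' := by positivity
  have key : ∀ z ∈ ball s₀ R, ‖h z‖ < ‖((2*M' : ℝ) : ℂ) - h z‖ := by
    intro z hz
    have hx := hre z hz
    rw [Complex.norm_def, Complex.norm_def]
    apply Real.sqrt_lt_sqrt (Complex.normSq_nonneg _)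
    simp only [Complex.normSq_apply, Complex.sub_re, Complex.sub_im, Complex.mul_re,
      Complex.mul_im, Complex.ofReal_re, Complex.ofReal_im]
    nlinarith [hx, hM'pos]
  have hden : ∀ z ∈ ball s₀ R, (((2*M' : ℝ) : ℂ) - h z) ≠ 0 := by
    intro z hz H
    have := key z hz
    rw [H] at this
    simp only [norm_zero] at this
    exact absurd this (not_lt.2 (norm_nonneg _))
  set Φ : ℂ → ℂ := fun z => h z / (((2*M' : ℝ) : ℂ) - h z) with hΦdef
  have hΦd : DifferentiableOn ℂ Φ (ball s₀ R) :=
    hd.div ((differentiableOn_const _).sub hd) hden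
  have hΦ0 : Φ s₀ = 0 := by simp [hΦdef, h0]
  have hmaps : Set.MapsTo Φ (ball s₀ R) (ball (Φ s₀) 1) := by
    intro z hz
    rw [hΦ0, mem_ball, dist_zero_right, hΦdef]
    simp only [norm_div]
    exact (div_lt_one (lt_of_le_of_lt (norm_nonneg _) (key z hz))).mpr (key z hz)
  have hΦsmall : ∀ z ∈ ball s₀ R, dist z s₀ ≤ 3*R/4 → ‖Φ z‖ ≤ 3/4 := by
    intro z hz hdist
    have := Complex.dist_le_div_mul_dist_of_mapsTo_ball hΦd (hmaps.mono_right ball_subset_closedBall) hz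
    rw [hΦ0, dist_zero_right] at this
    have h2 : 1 / R * dist z s₀ ≤ 1 / R * (3*R/4) := by
      apply mul_le_mul_of_nonneg_left hdist (by positivity)
    have h3 : 1 / R * (3*R/4) = 3/4 := by field_simp
    calc ‖Φ z‖ = ‖Φ z‖ := rfl
      _ ≤ 1 / R * dist z s₀ := this
      _ ≤ 3/4 := by rw [← h3]; exact h2
  have hhb : ∀ z ∈ ball s₀ R, dist z s₀ ≤ 3*R/4 → ‖h z‖ ≤ 6*M' := by
    intro z hz hdist
    have hΦz := hΦsmall z hz hdist
    have hid : h z * (1 + Φ z) = ((2*M' : ℝ) : ℂ) * Φ z := by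
      have hD := hden z hz
      have h1 : (1:ℂ) + Φ z = ((2*M' : ℝ) : ℂ) / (((2*M' : ℝ) : ℂ) - h z) := by
        have e : ((2*M' : ℝ) : ℂ) = (((2*M' : ℝ) : ℂ) - h z) + h z := by ring
        nth_rewrite 1 [e]
        rw [add_div, div_self hD, hΦdef]
      rw [h1, hΦdef]
      simp only
      ring
    have h1 : (1:ℝ)/4 ≤ ‖1 + Φ z‖ := by
      have htri := norm_add_le (1 + Φ z) (-(Φ z))
      simp only [add_neg_cancel_right, norm_neg, norm_one] at htri
      nlinarith [hΦz, htri]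
    have h2 : ‖h z‖ * ‖1 + Φ z‖ ≤ 2*M'*(3/4) := by
      rw [← norm_mul, hid, norm_mul]
      have habs2 : ‖((2*M' : ℝ) : ℂ)‖ = 2*M' := by
        rw [Complex.norm_real, Real.norm_eq_abs]; exact abs_of_pos (by positivity)
      rw [habs2]
      nlinarith [hΦz, norm_nonneg (Φ z)]
    nlinarith [norm_nonneg (h z), norm_nonneg (1 + Φ z)]
  intro s hs
  have hsball : s ∈ ball s₀ R := by
    rw [mem_closedBall] at hs
    rw [mem_ball]
    linarith [hs, hR]
  have hsub : ball s (R/4) ⊆ ball s₀ R := by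
    intro w hw
    rw [mem_ball] at hw ⊢
    have := dist_triangle w s s₀
    rw [mem_closedBall] at hs
    linarith
  have hmaps2 : Set.MapsTo h (ball s (R/4)) (ball (h s) (12*M'+1)) := by
    intro w hw
    have hwball : w ∈ ball s₀ R := hsub hw
    have hwdist : dist w s₀ ≤ 3*R/4 := by
      have := dist_triangle w s s₀
      rw [mem_ball] at hw
      rw [mem_closedBall] at hs
      linarith
    have hsdist : dist s s₀ ≤ 3*R/4 := by
      rw [mem_closedBall] at hs; linarith
    have h1 := hhb w hwball hwdist
    have h2 := hhb s hsball hsdist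
    rw [mem_ball, dist_eq_norm]
    calc ‖h w - h s‖ ≤ ‖h w‖ + ‖h s‖ := norm_sub_le _ _
      _ ≤ 6*M' + 6*M' := add_le_add h1 h2
      _ < 12*M' + 1 := by linarith
  have := Complex.norm_deriv_le_div_of_mapsTo_ball (hd.mono hsub) (hmaps2.mono_right ball_subset_closedBall) (by positivity : (0:ℝ) < R/4)
  calc ‖deriv h s‖ ≤ (12*M'+1)/(R/4) := this
    _ = (12*(M+1)+1)*4/R := by rw [hM']; field_simp

lemma exists_log {F : ℂ → ℂ} {s₀ : ℂ} {R R' : ℝ} (hR : 0 < R) (hRR' : R < R')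
    (hF : AnalyticOnNhd ℂ F (ball s₀ R')) (hFnz : ∀ z ∈ ball s₀ R, F z ≠ 0) :
    ∃ h : ℂ → ℂ, (∀ z ∈ ball s₀ R, HasDerivAt h (deriv F z / F z) z) ∧ h s₀ = 0 ∧
      (∀ z ∈ ball s₀ R, Complex.exp (h z) = F z / F s₀) := by
  have hball : ball s₀ R ⊆ ball s₀ R' := ball_subset_ball (le_of_lt hRR')
  have hFs₀ : F s₀ ≠ 0 := hFnz s₀ (mem_ball_self hR)
  have hFd : ∀ y ∈ ball s₀ R', DifferentiableAt ℂ F y := fun y hy => (hF y hy).differentiableAt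
  have hFcont : ContinuousOn F (ball s₀ R') := fun y hy => (hFd y hy).continuousAt.continuousWithinAt
  have hF'cont : ContinuousOn (deriv F) (ball s₀ R') := (hF.deriv).continuousOn
  set G : ℂ → ℂ := fun z => deriv F z / F z with hGdef
  have hGcont : ContinuousOn G (ball s₀ R) :=
    (hF'cont.mono hball).div (hFcont.mono hball) hFnz
  set c : ℝ → ℝ := fun t => max 0 (min 1 t) with hcdef
  have hccont : Continuous c := continuous_const.max (continuous_const.min continuous_id)
  have hc01 : ∀ t, 0 ≤ c t ∧ c t ≤ 1 := fun t =>
    ⟨le_max_left _ _, max_le zero_le_one (min_le_left _ _)⟩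
  have hceq : ∀ t ∈ Set.Icc (0:ℝ) 1, c t = t := by
    intro t ht
    simp only [hcdef]
    rw [min_eq_right ht.2, max_eq_right ht.1]
  set γ : ℂ → ℝ → ℂ := fun z t => s₀ + (c t : ℂ) * (z - s₀) with hγdef
  have hγmem : ∀ z ∈ ball s₀ R, ∀ t : ℝ, γ z t ∈ ball s₀ R := by
    intro z hz t
    rw [mem_ball, Complex.dist_eq] at hz ⊢
    simp only [hγdef]
    have e : s₀ + (c t : ℂ) * (z - s₀) - s₀ = (c t : ℂ) * (z - s₀) := by ring
    rw [e, norm_mul, Complex.norm_real, Real.norm_eq_abs]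
    have h1 : |c t| ≤ 1 := abs_le.2 ⟨by linarith [(hc01 t).1], (hc01 t).2⟩
    calc |c t| * ‖z - s₀‖ ≤ 1 * ‖z - s₀‖ :=
          mul_le_mul_of_nonneg_right h1 (norm_nonneg _)
      _ = ‖z - s₀‖ := one_mul _
      _ < R := hz
  set h : ℂ → ℂ := fun z => (z - s₀) * ∫ t in (0:ℝ)..1, G (γ z t) with hhdef
  have hh0 : h s₀ = 0 := by simp [hhdef]
  -- continuity of h on the ball
  have hhcont : ContinuousOn h (ball s₀ R) := by
    rw [continuousOn_iff_continuous_restrict]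
    have hψ : Continuous (fun p : (ball s₀ R) × ℝ => γ (↑p.1) p.2) := by
      apply continuous_const.add
      exact ((Complex.continuous_ofReal.comp (hccont.comp continuous_snd)).mul
        ((continuous_subtype_val.comp continuous_fst).sub continuous_const))
    have huncurry : Continuous (Function.uncurry fun (z : ball s₀ R) (t : ℝ) => G (γ (↑z) t)) := by
      apply hGcont.comp_continuous hψ
      intro p
      exact hγmem (↑p.1) p.1.2 p.2
    have hint : Continuous (fun z : ball s₀ R => ∫ t in (0:ℝ)..1, G (γ (↑z) t)) :=
      intervalIntegral.continuous_parametric_intervalIntegral_of_continuous' huncurry 0 1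
    exact ((continuous_subtype_val.sub continuous_const).mul hint)
  -- the exponential identity
  have hexp : ∀ z ∈ ball s₀ R, Complex.exp (h z) = F z / F s₀ := by
    intro z hz
    set I : ℝ → ℂ := fun t => (z - s₀) * G (γ z t) with hIdef
    have hIcont : Continuous I := by
      apply continuous_const.mul
      apply hGcont.comp_continuous
      · exact continuous_const.add ((Complex.continuous_ofReal.comp hccont).mul continuous_const)
      · exact fun t => hγmem z hz t
    set Ψ : ℝ → ℂ := fun u => ∫ t in (0:ℝ)..u, I t with hΨdef
    have hΨd : ∀ t : ℝ, HasDerivAt Ψ (I t) t := fun t =>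
      (hIcont.integral_hasStrictDerivAt 0 t).hasDerivAt
    set A : ℝ → ℂ := fun t => F (s₀ + (t:ℂ) * (z - s₀)) with hAdef
    have hmem2 : ∀ t ∈ Set.Icc (0:ℝ) 1, s₀ + (t:ℂ) * (z - s₀) ∈ ball s₀ R := by
      intro t ht
      have := hγmem z hz t
      simp only [hγdef] at this
      rwa [hceq t ht] at this
    have hAd : ∀ t ∈ Set.Icc (0:ℝ) 1,
        HasDerivAt A (deriv F (s₀ + (t:ℂ) * (z - s₀)) * (z - s₀)) t := by
      intro t ht
      have hin : HasDerivAt (fun w : ℂ => s₀ + w * (z - s₀)) (z - s₀) (↑t : ℂ) := by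
        simpa using ((hasDerivAt_id ((t:ℝ) : ℂ)).mul_const (z - s₀)).const_add s₀
      have hout : HasDerivAt F (deriv F (s₀ + (t:ℂ) * (z - s₀))) (s₀ + (t:ℂ) * (z - s₀)) :=
        (hFd _ (hball (hmem2 t ht))).hasDerivAt
      have hcomp := (hout.comp (↑t : ℂ) hin)
      exact hcomp.comp_ofReal
    set Φ : ℝ → ℂ := fun t => A t * Complex.exp (-Ψ t) with hΦdef
    have hΦd : ∀ t ∈ Set.Icc (0:ℝ) 1, HasDerivAt Φ 0 t := by
      intro t ht
      have hE : HasDerivAt (fun u => Complex.exp (-Ψ u)) (Complex.exp (-Ψ t) * (-I t)) t :=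
        ((hΨd t).neg).cexp
      have := (hAd t ht).mul hE
      refine this.congr_deriv ?_
      have hy : γ z t = s₀ + (t:ℂ) * (z - s₀) := by
        simp only [hγdef]; rw [hceq t ht]
      have hyF : F (s₀ + (t:ℂ) * (z - s₀)) ≠ 0 := hFnz _ (hmem2 t ht)
      rw [hIdef, hGdef]
      simp only [hy]
      field_simp
      ring
    have hconst : Φ 1 = Φ 0 := by
      have := constant_of_has_deriv_right_zero (f := Φ) (a := 0) (b := 1)
        (fun t ht => ((hΦd t ht).continuousAt).continuousWithinAt)
        (fun t ht => ((hΦd t (Set.mem_Icc_of_Ico ht)).hasDerivWithinAt))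
      exact this 1 (Set.right_mem_Icc.2 zero_le_one)
    have hΨ1 : Ψ 1 = h z := by
      rw [hΨdef, hhdef, hIdef]
      simp only
      rw [intervalIntegral.integral_const_mul]
    have hΨ0 : Ψ 0 = 0 := intervalIntegral.integral_same
    have hA1 : A 1 = F z := by rw [hAdef]; norm_num
    have hA0 : A 0 = F s₀ := by rw [hAdef]; norm_num
    rw [hΦdef] at hconst
    simp only [hA1, hA0, hΨ1, hΨ0, neg_zero, Complex.exp_zero, mul_one] at hconst
    rw [eq_div_iff hFs₀, mul_comm]
    calc F s₀ * Complex.exp (h z) = (F z * Complex.exp (-h z)) * Complex.exp (h z) := by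
          rw [hconst]
      _ = F z := by rw [mul_assoc, ← Complex.exp_add]; simp
  refine ⟨h, ?_, hh0, hexp⟩
  intro z₁ hz₁
  have hqz : F z₁ ≠ 0 := hFnz z₁ hz₁
  set q : ℂ → ℂ := fun w => F w / F s₀ with hqdef
  have hq1 : q z₁ ≠ 0 := div_ne_zero hqz hFs₀
  have hqcont : ContinuousAt q z₁ := ((hFd z₁ (hball hz₁)).continuousAt).div_const _
  have hsmall : ∀ᶠ w in nhds z₁, ‖q w / q z₁ - 1‖ < 1 := by
    have hc2 : ContinuousAt (fun w => ‖q w / q z₁ - 1‖) z₁ :=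
      continuous_norm.continuousAt.comp ((hqcont.div_const _).sub continuousAt_const)
    have h0 : ‖q z₁ / q z₁ - 1‖ = 0 := by rw [div_self hq1]; simp
    have htend : Filter.Tendsto (fun w => ‖q w / q z₁ - 1‖) (nhds z₁) (nhds 0) := by
      have := hc2.tendsto
      rwa [h0] at this
    exact htend.eventually_lt_const zero_lt_one
  obtain ⟨ε, hε, hball_sub⟩ := Metric.mem_nhds_iff.1
    (Filter.inter_mem hsmall (isOpen_ball.mem_nhds hz₁))
  have hmemN : ∀ w ∈ ball z₁ ε, ‖q w / q z₁ - 1‖ < 1 ∧ w ∈ ball s₀ R :=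
    fun w hw => hball_sub hw
  have hsub2 : ball z₁ ε ⊆ ball s₀ R := fun w hw => (hmemN w hw).2
  have hqw_ne : ∀ w ∈ ball z₁ ε, q w / q z₁ ≠ 0 ∧ q w / q z₁ ∈ Complex.slitPlane := by
    intro w hw
    have h1 := (hmemN w hw).1
    have hre : 0 < (q w / q z₁).re := by
      have h2 := Complex.re_le_norm (1 - q w / q z₁)
      have habs : ‖1 - q w / q z₁‖ = ‖q w / q z₁ - 1‖ := by
        rw [← norm_neg]; ring_nf
      rw [habs] at h2
      simp only [Complex.sub_re, Complex.one_re] at h2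
      linarith
    refine ⟨fun H => by rw [H] at hre; simp at hre, Complex.mem_slitPlane_iff.2 (Or.inl hre)⟩
  set d : ℂ → ℂ := fun w => h w - h z₁ - Complex.log (q w / q z₁) with hddef
  have hdcont : ContinuousOn d (ball z₁ ε) := by
    have h1 : ContinuousOn h (ball z₁ ε) := hhcont.mono hsub2
    have h2 : ContinuousOn (fun w => Complex.log (q w / q z₁)) (ball z₁ ε) := by
      apply ContinuousOn.clog
      · exact (((hFcont.mono (hsub2.trans hball)).div_const _).div_const _)
      · intro w hw; exact (hqw_ne w hw).2
    exact (h1.sub continuousOn_const).sub h2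
  have hdval : ∀ w ∈ ball z₁ ε, ∃ n : ℤ, d w = n * (2 * Real.pi * Complex.I) := by
    intro w hw
    rw [← Complex.exp_eq_one_iff, hddef]
    simp only
    rw [Complex.exp_sub, Complex.exp_sub, Complex.exp_log (hqw_ne w hw).1,
      hexp w (hmemN w hw).2, hexp z₁ hz₁]
    have hne := (hqw_ne w hw).1
    exact div_self hne
  have hd0 : d z₁ = 0 := by
    rw [hddef]; simp only
    rw [div_self hq1, Complex.log_one]; ring
  have hπ : (0:ℝ) < Real.pi := Real.pi_pos
  have hdzero : ∀ w ∈ ball z₁ ε, d w = 0 := by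
    intro w hw
    obtain ⟨n, hn⟩ := hdval w hw
    rcases lt_trichotomy n 0 with hneg | rfl | hpos
    · exfalso
      have hIm : (d w).im = (n:ℝ) * (2 * Real.pi) := by
        rw [hn]
        simp [Complex.mul_im]
      have hImCont : ContinuousOn (fun w => (d w).im) (ball z₁ ε) :=
        Complex.continuous_im.comp_continuousOn hdcont
      have hIVT := (convex_ball z₁ ε).isPreconnected.intermediate_value hw
        (mem_ball_self hε) hImCont
      have hmem : -Real.pi ∈ Set.Icc ((d w).im) ((d z₁).im) := by
        rw [hIm, hd0, Set.mem_Icc]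
        simp only [Complex.zero_im]
        have hn1 : (n:ℝ) ≤ -1 := by exact_mod_cast (by omega : n ≤ -1)
        constructor
        · nlinarith
        · linarith
      obtain ⟨w', hw', heqw'⟩ := hIVT hmem
      obtain ⟨m, hm⟩ := hdval w' hw'
      have hthis : (d w').im = (m:ℝ) * (2 * Real.pi) := by rw [hm]; simp [Complex.mul_im]
      have heqb : (d w').im = -Real.pi := heqw'
      have h2 : ((2*m+1 : ℤ) : ℝ) * Real.pi = 0 := by push_cast; linarith
      have h3 : ((2*m+1 : ℤ) : ℝ) = 0 := by
        rcases mul_eq_zero.1 h2 with h | h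
        · exact h
        · exact absurd h (ne_of_gt hπ)
      have : (2*m+1 : ℤ) = 0 := by exact_mod_cast h3
      omega
    · rw [hn]; simp
    · exfalso
      have hIm : (d w).im = (n:ℝ) * (2 * Real.pi) := by
        rw [hn]
        simp [Complex.mul_im]
      have hImCont : ContinuousOn (fun w => (d w).im) (ball z₁ ε) :=
        Complex.continuous_im.comp_continuousOn hdcont
      have hIVT := (convex_ball z₁ ε).isPreconnected.intermediate_value
        (mem_ball_self hε) hw hImCont
      have hmem : Real.pi ∈ Set.Icc ((d z₁).im) ((d w).im) := by
        rw [hIm, hd0, Set.mem_Icc]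
        simp only [Complex.zero_im]
        have hn1 : (1:ℝ) ≤ (n:ℝ) := by exact_mod_cast hpos
        constructor
        · linarith
        · nlinarith
      obtain ⟨w', hw', heqw'⟩ := hIVT hmem
      obtain ⟨m, hm⟩ := hdval w' hw'
      have hthis : (d w').im = (m:ℝ) * (2 * Real.pi) := by rw [hm]; simp [Complex.mul_im]
      have heqb : (d w').im = Real.pi := heqw'
      have h2 : ((2*m-1 : ℤ) : ℝ) * Real.pi = 0 := by push_cast; linarith
      have h3 : ((2*m-1 : ℤ) : ℝ) = 0 := by
        rcases mul_eq_zero.1 h2 with h | h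
        · exact h
        · exact absurd h (ne_of_gt hπ)
      have : (2*m-1 : ℤ) = 0 := by exact_mod_cast h3
      omega
  have heqloc : ∀ᶠ w in nhds z₁, h w = h z₁ + Complex.log (q w / q z₁) := by
    filter_upwards [ball_mem_nhds z₁ hε] with w hw
    have h1 := hdzero w hw
    rw [hddef] at h1
    simp only at h1
    linear_combination h1
  have hgd : HasDerivAt (fun w => h z₁ + Complex.log (q w / q z₁)) (deriv F z₁ / F z₁) z₁ := by
    have hqd : HasDerivAt q (deriv F z₁ / F s₀) z₁ :=
      ((hFd z₁ (hball hz₁)).hasDerivAt).div_const _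
    have hgd1 : HasDerivAt (fun w => q w / q z₁) ((deriv F z₁ / F s₀) / q z₁) z₁ :=
      hqd.div_const _
    have hsl : q z₁ / q z₁ ∈ Complex.slitPlane := by
      rw [div_self hq1]; exact Complex.one_mem_slitPlane
    have := (hgd1.clog hsl).const_add (h z₁)
    refine this.congr_deriv ?_
    rw [div_self hq1, div_one, hqdef]
    simp only
    rw [div_div]
    congr 1
    field_simp
  exact hgd.congr_of_eventuallyEq heqloc

lemma logDeriv_pow_term {ρ s : ℂ} (hs : s ≠ ρ) (m : ℕ) :
    logDeriv (fun w => (w - ρ) ^ m) s = (m : ℂ) / (s - ρ) := by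
  have hD : HasDerivAt (fun w : ℂ => (w - ρ) ^ m) ((m : ℂ) * (s - ρ) ^ (m - 1)) s := by
    exact (((hasDerivAt_id s).sub_const ρ).pow m).congr_deriv (by simp)
  rw [logDeriv_apply, hD.deriv]
  have hsρ : s - ρ ≠ 0 := sub_ne_zero.2 hs
  cases m with
  | zero => simp
  | succ k =>
    have hk : (s - ρ) ^ (k + 1) ≠ 0 := pow_ne_zero _ hsρ
    rw [pow_succ]
    simp only [Nat.add_sub_cancel]
    field_simp

/-- Lemma B (Landau–Titchmarsh): if `f` is analytic on a neighborhood of the closed disk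
`|s - s₀| ≤ r`, `f s₀ ≠ 0`, and `|f s| ≤ e^M |f s₀|` on the disk, then for `|s - s₀| ≤ r/4`
with `f s ≠ 0`, the logarithmic derivative `f'/f` is approximated, up to `A·M/r`, by the sum
of `m_ρ/(s - ρ)` over the zeros `ρ` of `f` with `|ρ - s₀| ≤ r/2`, counted with multiplicity. -/
theorem logDeriv_approx_by_zero_sum :
    ∃ A : ℝ, 0 < A ∧
      ∀ (s₀ : ℂ) (r M : ℝ) (f : ℂ → ℂ),
        0 < r → 1 < M →
        (∃ U : Set ℂ, IsOpen U ∧ Metric.closedBall s₀ r ⊆ U ∧ AnalyticOnNhd ℂ f U) →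
        f s₀ ≠ 0 →
        (∀ s : ℂ, ‖s - s₀‖ ≤ r →
          ‖f s‖ ≤ Real.exp M * ‖f s₀‖) →
        ∀ s : ℂ, ‖s - s₀‖ ≤ r / 4 → f s ≠ 0 →
          ‖deriv f s / f s -
              ∑ᶠ ρ ∈ {ρ : ℂ | ‖ρ - s₀‖ ≤ r / 2 ∧ f ρ = 0},
                (zeroOrder f ρ : ℂ) / (s - ρ)‖ < A * M / r := by
  refine ⟨201, by norm_num, ?_⟩
  intro s₀ r M f hr hM hU hf0 hbound s hs hfs
  obtain ⟨U, hUopen, hUsub, hUf⟩ := hU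
  have hM0 : (0:ℝ) < M := lt_trans one_pos hM
  -- Step 1: enlarge to an open ball
  obtain ⟨δ, hδ, hthick⟩ :=
    (isCompact_closedBall s₀ r).exists_thickening_subset_open hUopen hUsub
  set R' : ℝ := δ + r with hR'def
  have hrR' : r < R' := by rw [hR'def]; linarith
  have hball_sub : ball s₀ R' ⊆ U := by
    rw [← thickening_closedBall hδ hr.le s₀]; exact hthick
  have hV : AnalyticOnNhd ℂ f (ball s₀ R') := hUf.mono hball_sub
  -- Step 2: zeros finite
  have hr2R' : r / 2 < R' := by linarith
  obtain ⟨hfin, hnz⟩ := zeros_finite (by positivity : (0:ℝ) ≤ r/2) hr2R' hV hf0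
  set T : Finset ℂ := hfin.toFinset with hTdef
  have hTmem : ∀ ρ : ℂ, ρ ∈ T ↔ (‖ρ - s₀‖ ≤ r/2 ∧ f ρ = 0) := by
    intro ρ; rw [hTdef, Set.Finite.mem_toFinset]; rfl
  have hTball : ∀ ρ ∈ T, ρ ∈ ball s₀ R' := by
    intro ρ hρ
    rw [mem_ball, Complex.dist_eq]
    exact lt_of_le_of_lt ((hTmem ρ).1 hρ).1 hr2R'
  -- Step 3: order witnesses
  have hwit : ∀ ρ ∈ T, ∃ m : ℕ, ∃ g0 : ℂ → ℂ, AnalyticAt ℂ g0 ρ ∧ g0 ρ ≠ 0 ∧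
      ∀ᶠ w in nhds ρ, f w = (w - ρ) ^ m * g0 w := by
    intro ρ hρ
    have hA : AnalyticAt ℂ f ρ := hV ρ (hTball ρ hρ)
    have hnt : analyticOrderAt f ρ ≠ ⊤ :=
      fun hc => hnz ρ (hTball ρ hρ) ((analyticOrderAt_eq_top).1 hc)
    obtain ⟨m, hm⟩ := WithTop.ne_top_iff_exists.1 hnt
    obtain ⟨g0, hg1, hg2, hg3⟩ := (hA.analyticOrderAt_eq_natCast (n := m)).1 hm.symm
    exact ⟨m, g0, hg1, hg2, by simpa [smul_eq_mul] using hg3⟩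
  -- Step 4: factorization
  obtain ⟨F, hFan, hFne, hfac⟩ := factor_finset isOpen_ball T f hV
    (fun ρ hρ => ((hTmem ρ).1 hρ).2) hwit
  set P : ℂ → ℂ := fun w => ∏ ρ ∈ T, (w - ρ) ^ (zeroOrder f ρ) with hPdef
  -- Step 5: F nonzero on closed ball r/2 and at s₀
  have hFnz2 : ∀ z : ℂ, ‖z - s₀‖ ≤ r/2 → F z ≠ 0 := by
    intro z hz hFz
    by_cases hfz : f z = 0
    · exact hFne z ((hTmem z).2 ⟨hz, hfz⟩) hFz
    · exact hfz (by rw [hfac z, hFz, mul_zero])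
  have hFs₀ : F s₀ ≠ 0 := hFnz2 s₀ (by simp; positivity)
  have habsF₀pos : 0 < ‖F s₀‖ := by
    simpa [norm_pos_iff] using hFs₀
  -- Step 6: max modulus bound for F on closed ball r
  have hFbound : ∀ z ∈ closedBall s₀ r, ‖F z‖ ≤ Real.exp M * ‖F s₀‖ := by
    have hfront : ∀ z ∈ frontier (ball s₀ r), ‖F z‖ ≤ Real.exp M * ‖F s₀‖ := by
      rw [frontier_ball s₀ hr.ne']
      intro z hz
      rw [mem_sphere_iff_norm] at hz
      have hzabs : ‖z - s₀‖ = r := hz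
      set N : ℕ := ∑ ρ ∈ T, zeroOrder f ρ with hNdef
      have hr2pos : (0:ℝ) < r/2 := by positivity
      have hPlow : (r/2)^N ≤ ‖P z‖ := by
        rw [hPdef]
        simp only [norm_prod, norm_pow]
        rw [hNdef, ← Finset.prod_pow_eq_pow_sum]
        apply Finset.prod_le_prod
        · intro ρ _; positivity
        · intro ρ hρ
          apply pow_le_pow_left₀ hr2pos.le
          have h1 := ((hTmem ρ).1 hρ).1
          have h2 : ‖z - s₀‖ ≤ ‖z - ρ‖ + ‖ρ - s₀‖ := by
            have : z - s₀ = (z - ρ) + (ρ - s₀) := by ring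
            rw [this]; exact norm_add_le _ _
          linarith [hzabs ▸ h2]
      have hPup : ‖P s₀‖ ≤ (r/2)^N := by
        rw [hPdef]
        simp only [norm_prod, norm_pow]
        rw [hNdef, ← Finset.prod_pow_eq_pow_sum]
        apply Finset.prod_le_prod
        · intro ρ _; positivity
        · intro ρ hρ
          apply pow_le_pow_left₀ (norm_nonneg _)
          have h1 := ((hTmem ρ).1 hρ).1
          rwa [norm_sub_rev]
      have hPzpos : 0 < ‖P z‖ := lt_of_lt_of_le (by positivity) hPlow
      have hFz : ‖F z‖ = ‖f z‖ / ‖P z‖ := by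
        rw [eq_div_iff (ne_of_gt hPzpos), hfac z, norm_mul, mul_comm]
      have hfz : ‖f z‖ ≤ Real.exp M * ‖f s₀‖ :=
        hbound z (le_of_eq hzabs)
      have hfs₀ : ‖f s₀‖ ≤ (r/2)^N * ‖F s₀‖ := by
        rw [hfac s₀, norm_mul]
        exact mul_le_mul_of_nonneg_right hPup (norm_nonneg _)
      rw [show ‖F z‖ = ‖F z‖ from rfl, hFz]
      rw [div_le_iff₀ hPzpos]
      calc ‖f z‖ ≤ Real.exp M * ‖f s₀‖ := hfz
        _ ≤ Real.exp M * ((r/2)^N * ‖F s₀‖) := by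
            exact mul_le_mul_of_nonneg_left hfs₀ (Real.exp_pos M).le
        _ = Real.exp M * ‖F s₀‖ * (r/2)^N := by ring
        _ ≤ Real.exp M * ‖F s₀‖ * ‖P z‖ := by
            apply mul_le_mul_of_nonneg_left hPlow
            positivity
    intro z hz
    have hd : DiffContOnCl ℂ F (ball s₀ r) := by
      apply DifferentiableOn.diffContOnCl
      rw [closure_ball s₀ hr.ne']
      intro w hw
      exact (hFan w (lt_of_le_of_lt (mem_closedBall.1 hw) hrR')).differentiableAt.differentiableWithinAt
    have := Complex.norm_le_of_forall_mem_frontier_norm_le isBounded_ball hd hfront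
      (z := z) (by rw [closure_ball s₀ hr.ne']; exact hz)
    exact this
  -- Step 7: logarithm
  have hr2pos : (0:ℝ) < r/2 := by positivity
  obtain ⟨h, hhd, hh0, hhexp⟩ := exists_log hr2pos hr2R' hFan
    (fun z hz => hFnz2 z (by rw [mem_ball, Complex.dist_eq] at hz; linarith))
  -- Step 8: Re h ≤ M
  have hre : ∀ z ∈ ball s₀ (r/2), (h z).re ≤ M := by
    intro z hz
    have h1 : ‖Complex.exp (h z)‖ = ‖F z‖ / ‖F s₀‖ := by
      rw [hhexp z hz, norm_div]
    have h2 : z ∈ closedBall s₀ r := by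
      rw [mem_ball, Complex.dist_eq] at hz
      rw [mem_closedBall, Complex.dist_eq]
      linarith
    have h3 : ‖F z‖ / ‖F s₀‖ ≤ Real.exp M := by
      rw [div_le_iff₀ habsF₀pos]
      exact hFbound z h2
    rw [Complex.norm_exp] at h1
    have := h1 ▸ h3
    exact (Real.exp_le_exp).1 this
  -- Step 9: Borel-Caratheodory
  have hdiff : DifferentiableOn ℂ h (ball s₀ (r/2)) :=
    fun z hz => (hhd z hz).differentiableAt.differentiableWithinAt
  have hbc := borel_caratheodory_deriv hr2pos hdiff hh0 hM0 hre
  -- Step 10: assemble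
  have hsball : s ∈ ball s₀ (r/2) := by
    rw [mem_ball, Complex.dist_eq]
    linarith
  have hsT : s ∉ T := fun hsT => hfs ((hTmem s).1 hsT).2
  have hPs : P s ≠ 0 := by
    rw [hPdef]
    apply Finset.prod_ne_zero_iff.2
    intro ρ hρ
    exact pow_ne_zero _ (sub_ne_zero.2 (fun h => hsT (h ▸ hρ)))
  have hFs : F s ≠ 0 := fun hFz => hfs (by rw [hfac s, hFz, mul_zero])
  have hfun : f = fun w => P w * F w := funext fun w => hfac w
  have hsum : (∑ᶠ ρ ∈ {ρ : ℂ | ‖ρ - s₀‖ ≤ r / 2 ∧ f ρ = 0},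
      (zeroOrder f ρ : ℂ) / (s - ρ)) = ∑ ρ ∈ T, (zeroOrder f ρ : ℂ) / (s - ρ) := by
    rw [show {ρ : ℂ | ‖ρ - s₀‖ ≤ r / 2 ∧ f ρ = 0} = (↑T : Set ℂ) by
      rw [hTdef, Set.Finite.coe_toFinset]]
    exact finsum_mem_coe_finset _ _
  have hld : deriv f s / f s = (∑ ρ ∈ T, (zeroOrder f ρ : ℂ) / (s - ρ)) + deriv F s / F s := by
    have h1 : deriv f s / f s = logDeriv (fun w => P w * F w) s := by
      rw [show (fun w => P w * F w) = f from (funext fun w => (hfac w).symm)]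
      rfl
    rw [h1]
    have hdP : ∀ ρ ∈ T, DifferentiableAt ℂ (fun w : ℂ => (w - ρ) ^ (zeroOrder f ρ)) s :=
      fun ρ _ => (((differentiableAt_id).sub (differentiableAt_const _)).pow _)
    have hsR' : s ∈ ball s₀ R' := by
      rw [mem_ball, Complex.dist_eq]; linarith
    have h2 : logDeriv (fun w => P w * F w) s = logDeriv P s + logDeriv F s := by
      apply logDeriv_mul s hPs hFs
      · exact DifferentiableAt.fun_finsetProd hdP
      · exact (hFan s hsR').differentiableAt
    have hne : ∀ ρ ∈ T, (fun w : ℂ => (w - ρ) ^ (zeroOrder f ρ)) s ≠ 0 := by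
      intro ρ hρ
      exact pow_ne_zero _ (sub_ne_zero.2 (fun h => hsT (h ▸ hρ)))
    have h4 := logDeriv_prod (s := T) (f := fun ρ (w : ℂ) => (w - ρ) ^ (zeroOrder f ρ)) (x := s) hne hdP
    have h3 : logDeriv P s = ∑ ρ ∈ T, (zeroOrder f ρ : ℂ) / (s - ρ) := by
      calc logDeriv P s
          = ∑ ρ ∈ T, logDeriv (fun w : ℂ => (w - ρ) ^ (zeroOrder f ρ)) s := by
            convert h4 using 2
        _ = ∑ ρ ∈ T, (zeroOrder f ρ : ℂ) / (s - ρ) := by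
            apply Finset.sum_congr rfl
            intro ρ hρ
            exact logDeriv_pow_term (fun h => hsT (by rw [h]; exact hρ)) _
    rw [h2, h3]
    rfl
  have hderivh : deriv h s = deriv F s / F s := (hhd s hsball).deriv
  have hkey : ‖deriv f s / f s -
      ∑ᶠ ρ ∈ {ρ : ℂ | ‖ρ - s₀‖ ≤ r / 2 ∧ f ρ = 0},
        (zeroOrder f ρ : ℂ) / (s - ρ)‖ = ‖deriv h s‖ := by
    rw [hsum, hld, hderivh]
    simp only [add_sub_cancel_left]
  rw [hkey]
  have hsc : s ∈ closedBall s₀ ((r/2)/2) := by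
    rw [mem_closedBall, Complex.dist_eq]
    linarith
  calc ‖deriv h s‖ ≤ (12*(M+1)+1)*4/(r/2) := hbc s hsc
    _ < 201 * M / r := by
        rw [div_lt_div_iff₀ (by positivity) hr]
        nlinarith
end

section
/- Let n ≥ 2 be an integer, ρ ∈ ℝ, u > 0 and m ≥ 1. For each k = 1, …, m let a_k ≥ 0 be a real shift, ε_k ∈ {+1, −1}, and let Z_{k,1}, Z_{k,2} be entire functions, neither identically zero, satisfying (with constants c₀ ≥ ρ + 1, d_k > 0, B_k > 0, C_k ∈ ℝ possibly depending on k): (1) for all real a < b there is K > 0 with |Z_{k,i}(σ + it)| ≤ exp(K(1 + |t|)^{n−1}) for a ≤ σ ≤ b; (2) every zero of Z_{k,1} and of Z_{k,2} with positive imaginary part lies on the line Re s = ρ; (3) the counting function N_k(t) of zeros of Z_{k,1}·Z_{k,2}, with multiplicity, with 0 < Im ≤ t satisfies N_k(t) = C_k·tⁿ + O(t^{n−1}); (4) |Z_{k,i}(c₀ + it)| ≥ d_k for t ≥ 1; (5) Z_{k,1}, Z_{k,2} have no zeros in {Re s ≥ c₀, Im s ≥ 1} and |Z_{k,i}′(s)/Z_{k,i}(s)|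 ≤ B_k there. Define F(s) = ∏_{k=1}^m (Z_{k,1}(s + a_k)/Z_{k,2}(s + a_k))^{ε_k}. Then there exist C′ > 0 and t₀ > 0 (with C′ depending also on u) such that for all s = σ + it with t ≥ t₀ and ρ + u ≤ σ ≤ t/2 + ρ: |F′(s)/F(s)| ≤ C′·t^{n−1}. -/
open Complex Filter

open Metric Set MeasureTheory intervalIntegral

/-- Every function analytic on a ball has a primitive there. -/
lemma exists_primitive {z₀ : ℂ} {R : ℝ} {g : ℂ → ℂ}
    (hg : ∀ z ∈ ball z₀ R, AnalyticAt ℂ g z) :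
    ∃ h : ℂ → ℂ, h z₀ = 0 ∧ ∀ z ∈ ball z₀ R, HasDerivAt h (g z) z := by
  set F : ℂ → ℝ → ℂ := fun z t => (z - z₀) * g (z₀ + (t : ℂ) * (z - z₀)) with hFdef
  set F' : ℂ → ℝ → ℂ :=
    fun z t => g (z₀ + (t : ℂ) * (z - z₀)) +
      (z - z₀) * ((t : ℂ) * deriv g (z₀ + (t : ℂ) * (z - z₀))) with hF'def
  refine ⟨fun z => ∫ t in (0:ℝ)..1, F z t, by simp [hFdef], ?_⟩
  intro z₁ hz₁
  have hz₁R : dist z₁ z₀ < R := mem_ball.1 hz₁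
  have hR : 0 < R := lt_of_le_of_lt dist_nonneg hz₁R
  set ε : ℝ := (R - dist z₁ z₀) / 2 with hεdef
  have hε : 0 < ε := by rw [hεdef]; linarith
  set r' : ℝ := (R + dist z₁ z₀) / 2 with hr'def
  have hr'R : r' < R := by rw [hr'def]; linarith
  have hr'0 : 0 ≤ r' := by positivity
  -- points on segments stay in the closed ball of radius r'
  have hmem : ∀ x ∈ ball z₁ ε, ∀ t : ℝ, t ∈ Set.uIcc (0:ℝ) 1 →
      z₀ + (t : ℂ) * (x - z₀) ∈ closedBall z₀ r' := by
    intro x hx t ht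
    have hx' : dist x z₀ ≤ r' := by
      have := dist_triangle x z₁ z₀
      have hxz : dist x z₁ < ε := mem_ball.1 hx
      rw [hr'def]; rw [hεdef] at hxz; linarith
    have ht' : |t| ≤ 1 := by
      rw [Set.uIcc_of_le (by norm_num : (0:ℝ) ≤ 1)] at ht
      rw [abs_le]; exact ⟨by linarith [ht.1], ht.2⟩
    rw [mem_closedBall, dist_eq_norm]
    have : z₀ + (t : ℂ) * (x - z₀) - z₀ = (t : ℂ) * (x - z₀) := by ring
    rw [this, norm_mul]
    have h1 : ‖(t : ℂ)‖ ≤ 1 := by rwa [Complex.norm_real, Real.norm_eq_abs]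
    have h2 : ‖x - z₀‖ ≤ r' := by rwa [← dist_eq_norm]
    calc ‖(t : ℂ)‖ * ‖x - z₀‖ ≤ 1 * r' := by
          exact mul_le_mul h1 h2 (norm_nonneg _) one_pos.le
      _ = r' := one_mul r'
  have hsub : closedBall z₀ r' ⊆ ball z₀ R := closedBall_subset_ball hr'R
  -- continuity bounds
  have hgc : ContinuousOn g (closedBall z₀ r') :=
    fun z hz => ((hg z (hsub hz)).continuousAt).continuousWithinAt
  have hgd : ContinuousOn (deriv g) (closedBall z₀ r') := by
    intro z hz
    have : AnalyticOnNhd ℂ g (ball z₀ R) := fun w hw => hg w hw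
    exact ((this.deriv_of_isOpen isOpen_ball z (hsub hz)).continuousAt).continuousWithinAt
  obtain ⟨Mg, hMg⟩ := (isCompact_closedBall z₀ r').exists_bound_of_continuousOn hgc
  obtain ⟨Md, hMd⟩ := (isCompact_closedBall z₀ r').exists_bound_of_continuousOn hgd
  have hMg0 : 0 ≤ Mg := le_trans (norm_nonneg _) (hMg z₀ (mem_closedBall_self hr'0))
  have hMd0 : 0 ≤ Md := le_trans (norm_nonneg _) (hMd z₀ (mem_closedBall_self hr'0))
  -- continuity in t for fixed x in the ball
  have hcont : ∀ x ∈ ball z₁ ε, ContinuousOn (fun t : ℝ => g (z₀ + (t : ℂ) * (x - z₀)))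
      (Set.uIcc (0:ℝ) 1) := by
    intro x hx
    have hq : Continuous (fun t : ℝ => z₀ + (t : ℂ) * (x - z₀)) := by continuity
    exact ContinuousOn.comp (fun w hw => (hg w (hsub hw)).continuousAt.continuousWithinAt)
      hq.continuousOn (fun t ht => hmem x hx t ht)
  have hcontd : ∀ x ∈ ball z₁ ε, ContinuousOn (fun t : ℝ => deriv g (z₀ + (t : ℂ) * (x - z₀)))
      (Set.uIcc (0:ℝ) 1) := by
    intro x hx
    have hq : Continuous (fun t : ℝ => z₀ + (t : ℂ) * (x - z₀)) := by continuity
    have han : AnalyticOnNhd ℂ g (ball z₀ R) := fun w hw => hg w hw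
    exact ContinuousOn.comp
      (fun w hw => ((han.deriv_of_isOpen isOpen_ball) w (hsub hw)).continuousAt.continuousWithinAt)
      hq.continuousOn (fun t ht => hmem x hx t ht)
  have hFcont : ∀ x ∈ ball z₁ ε, ContinuousOn (F x) (Set.uIcc (0:ℝ) 1) := by
    intro x hx
    exact (continuousOn_const.mul (hcont x hx))
  have hF'cont : ∀ x ∈ ball z₁ ε, ContinuousOn (F' x) (Set.uIcc (0:ℝ) 1) := by
    intro x hx
    refine (hcont x hx).add (continuousOn_const.mul (ContinuousOn.mul ?_ (hcontd x hx)))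
    exact Complex.continuous_ofReal.continuousOn
  have hz₁ε : z₁ ∈ ball z₁ ε := mem_ball_self hε
  -- the parametric derivative theorem
  have key := intervalIntegral.hasDerivAt_integral_of_dominated_loc_of_deriv_le
    (F := F) (F' := F') (x₀ := z₁) (a := (0:ℝ)) (b := 1) (μ := volume)
    (bound := fun _ => Mg + r' * Md) (ball_mem_nhds z₁ hε)
    ?_ ?_ ?_ ?_ ?_ ?_
  · obtain ⟨-, hkey⟩ := key
    -- compute the integral ∫ F' z₁ = g z₁ by FTC
    have hFTC : (∫ t in (0:ℝ)..1, F' z₁ t) = g z₁ := by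
      have hψ : ∀ t ∈ Set.uIcc (0:ℝ) 1,
          HasDerivAt (fun s : ℝ => (s : ℂ) * g (z₀ + (s : ℂ) * (z₁ - z₀))) (F' z₁ t) t := by
        intro t ht
        have hmem' := hsub (hmem z₁ hz₁ε t ht)
        have hG : HasDerivAt (fun w : ℂ => w * g (z₀ + w * (z₁ - z₀)))
            (g (z₀ + (t:ℂ) * (z₁ - z₀)) +
              (t:ℂ) * (deriv g (z₀ + (t:ℂ) * (z₁ - z₀)) * (z₁ - z₀))) ((t:ℂ)) := by
          have hinner : HasDerivAt (fun w : ℂ => z₀ + w * (z₁ - z₀)) (z₁ - z₀) ((t:ℂ)) := by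
            simpa using (((hasDerivAt_id ((t:ℂ))).mul_const (z₁ - z₀)).const_add z₀)
          have houter : HasDerivAt g (deriv g (z₀ + (t:ℂ) * (z₁ - z₀)))
              (z₀ + (t:ℂ) * (z₁ - z₀)) :=
            ((hg _ hmem').differentiableAt).hasDerivAt
          have hcomp := HasDerivAt.comp ((t:ℂ)) houter hinner
          have := (hasDerivAt_id ((t:ℂ))).mul hcomp
          simp only [Function.comp, id_eq, one_mul] at this
          refine this.congr_deriv ?_
          all_goals ring
        have := hG.comp_ofReal
        convert this using 1
        simp only [hF'def]
        ring
      have hint : IntervalIntegrable (F' z₁) volume 0 1 :=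
        (hF'cont z₁ hz₁ε).intervalIntegrable
      have := intervalIntegral.integral_eq_sub_of_hasDerivAt hψ hint
      rw [this]
      norm_num
    rw [hFTC] at hkey
    exact hkey
  · -- measurability of F x near z₁
    filter_upwards [ball_mem_nhds z₁ hε] with x hx
    exact ((hFcont x hx).mono uIoc_subset_uIcc).aestronglyMeasurable measurableSet_uIoc
  · exact (hFcont z₁ hz₁ε).intervalIntegrable
  · exact ((hF'cont z₁ hz₁ε).mono uIoc_subset_uIcc).aestronglyMeasurable measurableSet_uIoc
  · -- bound
    refine Filter.Eventually.of_forall (fun t ht x hx => ?_)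
    have ht' : t ∈ Set.uIcc (0:ℝ) 1 := uIoc_subset_uIcc ht
    have hmem' := hmem x hx t ht'
    have ht1 : |t| ≤ 1 := by
      rw [Set.uIcc_of_le (by norm_num : (0:ℝ) ≤ 1)] at ht'
      rw [abs_le]; exact ⟨by linarith [ht'.1], ht'.2⟩
    have hx' : ‖x - z₀‖ ≤ r' := by
      rw [← dist_eq_norm]
      have := dist_triangle x z₁ z₀
      have hxz : dist x z₁ < ε := mem_ball.1 hx
      rw [hr'def]; rw [hεdef] at hxz; linarith
    calc ‖F' x t‖ ≤ ‖g (z₀ + (t : ℂ) * (x - z₀))‖ +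
          ‖(x - z₀) * ((t : ℂ) * deriv g (z₀ + (t : ℂ) * (x - z₀)))‖ := norm_add_le _ _
      _ ≤ Mg + r' * Md := by
          gcongr
          · exact hMg _ hmem'
          · rw [norm_mul, norm_mul]
            have h1 : ‖(t:ℂ)‖ ≤ 1 := by rwa [Complex.norm_real, Real.norm_eq_abs]
            have h2 : ‖deriv g (z₀ + (t : ℂ) * (x - z₀))‖ ≤ Md := hMd _ hmem'
            calc ‖x - z₀‖ * (‖(t:ℂ)‖ * ‖deriv g (z₀ + (t : ℂ) * (x - z₀))‖)
                ≤ r' * (1 * Md) := by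
                  refine mul_le_mul hx' ?_ (by positivity) hr'0
                  exact mul_le_mul h1 h2 (norm_nonneg _) one_pos.le
              _ = r' * Md := by ring
  · exact intervalIntegrable_const
  · -- differentiability in x
    refine Filter.Eventually.of_forall (fun t ht x hx => ?_)
    have ht' : t ∈ Set.uIcc (0:ℝ) 1 := uIoc_subset_uIcc ht
    have hmem' := hsub (hmem x hx t ht')
    have hinner : HasDerivAt (fun y : ℂ => z₀ + (t:ℂ) * (y - z₀)) ((t:ℂ)) x := by
      simpa using ((((hasDerivAt_id x).sub_const z₀).const_mul ((t:ℂ))).const_add z₀)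
    have houter : HasDerivAt g (deriv g (z₀ + (t:ℂ) * (x - z₀))) (z₀ + (t:ℂ) * (x - z₀)) :=
      ((hg _ hmem').differentiableAt).hasDerivAt
    have hcomp := HasDerivAt.comp x houter hinner
    have hid : HasDerivAt (fun y : ℂ => y - z₀) 1 x := (hasDerivAt_id x).sub_const z₀
    have := hid.mul hcomp
    simp only [Function.comp, id_eq, one_mul] at this
    refine this.congr_deriv ?_
    simp only [hF'def]
    ring

/-- A nonvanishing entire function has a holomorphic logarithm on any ball. -/
lemma exists_log_s8 {z₀ : ℂ} {R : ℝ} {Z : ℂ → ℂ} (hZ : AnalyticOnNhd ℂ Z Set.univ)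
    (hZ0 : ∀ z ∈ ball z₀ R, Z z ≠ 0) :
    ∃ h : ℂ → ℂ, h z₀ = Complex.log (Z z₀) ∧
      (∀ z ∈ ball z₀ R, HasDerivAt h (logDeriv Z z) z) ∧
      (∀ z ∈ ball z₀ R, Complex.exp (h z) = Z z) := by
  have hganal : ∀ z ∈ ball z₀ R, AnalyticAt ℂ (logDeriv Z) z := by
    intro z hz
    have h1 : AnalyticAt ℂ (deriv Z) z := (hZ.deriv) z (Set.mem_univ z)
    have h2 : AnalyticAt ℂ Z z := hZ z (Set.mem_univ z)
    have : logDeriv Z = fun w => deriv Z w / Z w := rfl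
    rw [this]
    exact h1.div h2 (hZ0 z hz)
  obtain ⟨h₀, hh₀0, hh₀d⟩ := exists_primitive hganal
  set h : ℂ → ℂ := fun z => Complex.log (Z z₀) + h₀ z with hhdef
  have hhd : ∀ z ∈ ball z₀ R, HasDerivAt h (logDeriv Z z) z := by
    intro z hz
    exact (hh₀d z hz).const_add _
  have hexp : ∀ z ∈ ball z₀ R, Complex.exp (h z) = Z z := by
    rcases le_or_gt R 0 with hR | hR
    · intro z hz
      exact absurd hz (by simp [ball_eq_empty.2 hR])
    intro z hz
    have hz₀m : z₀ ∈ ball z₀ R := mem_ball_self hR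
    set p : ℂ → ℂ := fun w => Z w * Complex.exp (-h w) with hpdef
    have hp : ∀ w ∈ ball z₀ R, HasDerivAt p 0 w := by
      intro w hw
      have hZd : HasDerivAt Z (deriv Z w) w :=
        ((hZ w (Set.mem_univ w)).differentiableAt).hasDerivAt
      have hhd' : HasDerivAt (fun y => -h y) (-(logDeriv Z w)) w := (hhd w hw).neg
      have hexp' : HasDerivAt (fun y => Complex.exp (-h y))
          (-(logDeriv Z w) * Complex.exp (-h w)) w := by
        simpa [mul_comm] using hhd'.cexp
      have := hZd.mul hexp'
      refine this.congr_deriv ?_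
      have hZw : Z w ≠ 0 := hZ0 w hw
      rw [logDeriv_apply]
      field_simp
      ring
    have hconst : p z = p z₀ := by
      have hdiff : DifferentiableOn ℂ p (ball z₀ R) :=
        fun w hw => ((hp w hw).differentiableAt).differentiableWithinAt
      refine (convex_ball z₀ R).is_const_of_fderivWithin_eq_zero hdiff ?_ hz hz₀m
      intro w hw
      have h1 : HasFDerivAt p (ContinuousLinearMap.smulRight (1 : ℂ →L[ℂ] ℂ) (0:ℂ)) w :=
        (hp w hw).hasFDerivAt
      have h2 : (ContinuousLinearMap.smulRight (1 : ℂ →L[ℂ] ℂ) (0:ℂ)) = 0 := by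
        ext x; simp
      rw [fderivWithin_of_isOpen isOpen_ball hw]
      rw [h2] at h1
      exact h1.fderiv
    have hpz₀ : p z₀ = 1 := by
      have hZz₀ : Z z₀ ≠ 0 := hZ0 z₀ hz₀m
      simp only [hpdef, hhdef, hh₀0, add_zero, Complex.exp_neg, Complex.exp_log hZz₀]
      field_simp
    have : Z z * Complex.exp (-h z) = 1 := by rw [← hpz₀, ← hconst]
    have hexpne : Complex.exp (h z) ≠ 0 := Complex.exp_ne_zero _
    rw [Complex.exp_neg] at this
    field_simp at this
    linear_combination -this
  exact ⟨h, by simp [hhdef, hh₀0], hhd, hexp⟩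

/-- Borel–Carathéodory sup bound on a ball. -/
lemma bc_sup {h : ℂ → ℂ} {z₀ : ℂ} {R A : ℝ} (hR : 0 < R) (hA : 0 < A)
    (hd : DifferentiableOn ℂ h (ball z₀ R)) (hh0 : h z₀ = 0)
    (hre : ∀ z ∈ ball z₀ R, (h z).re < A) :
    ∀ z ∈ ball z₀ R, ‖h z‖ ≤ 2 * A * dist z z₀ / (R - dist z z₀) := by
  set φ : ℂ → ℂ := fun z => h z / (2 * A - h z) with hφdef
  have hden : ∀ z ∈ ball z₀ R, (2 * (A:ℂ) - h z) ≠ 0 := by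
    intro z hz heq
    have := congrArg Complex.re heq
    simp only [Complex.sub_re, Complex.mul_re, Complex.zero_re] at this
    have hrez := hre z hz
    simp at this
    nlinarith
  have hnormlt : ∀ z ∈ ball z₀ R, ‖φ z‖ < 1 := by
    intro z hz
    have hd0 := hden z hz
    rw [hφdef]
    simp only
    rw [norm_div, div_lt_one (norm_pos_iff.mpr hd0)]
    refine lt_of_pow_lt_pow_left₀ 2 (norm_nonneg _) ?_
    rw [Complex.sq_norm, Complex.sq_norm,
      Complex.normSq_apply, Complex.normSq_apply]
    simp only [Complex.sub_re, Complex.sub_im, Complex.mul_re, Complex.mul_im,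
      Complex.ofReal_re, Complex.ofReal_im]
    have hrez := hre z hz
    simp only [Complex.re_ofNat, Complex.im_ofNat]
    nlinarith
  have hφd : DifferentiableOn ℂ φ (ball z₀ R) :=
    DifferentiableOn.div (by fun_prop) ((differentiableOn_const _).sub hd) hden
  have hφ0 : φ z₀ = 0 := by simp [hφdef, hh0]
  have hmaps : Set.MapsTo φ (ball z₀ R) (ball (φ z₀) 1) := by
    intro z hz
    rw [hφ0, mem_ball, dist_zero_right]
    exact hnormlt z hz
  intro z hz
  have hsch := Complex.dist_le_div_mul_dist_of_mapsTo_ball hφd (hmaps.mono_right ball_subset_closedBall) hz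
  rw [hφ0, dist_zero_right] at hsch
  -- h z (1 + φ z) = 2A φ z
  have hd0 := hden z hz
  have halg : h z * (1 + φ z) = 2 * A * φ z := by
    rw [hφdef]
    field_simp
    ring
  have h1φ : (1:ℝ) - ‖φ z‖ ≤ ‖1 + φ z‖ := by
    have := norm_add_le (1 + φ z) (-φ z)
    simp only [add_neg_cancel_right, norm_neg, norm_one] at this
    linarith
  have hnq : ‖h z‖ * (1 - ‖φ z‖) ≤ 2 * A * ‖φ z‖ := by
    calc ‖h z‖ * (1 - ‖φ z‖) ≤ ‖h z‖ * ‖1 + φ z‖ := by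
          refine mul_le_mul_of_nonneg_left h1φ (norm_nonneg _)
      _ = ‖h z * (1 + φ z)‖ := (norm_mul _ _).symm
      _ = ‖(2 * (A:ℂ)) * φ z‖ := by rw [halg]
      _ = 2 * A * ‖φ z‖ := by
          rw [norm_mul]
          congr 1
          rw [norm_mul]
          simp [Complex.norm_real, abs_of_pos hA]
  have hDlt : dist z z₀ < R := mem_ball.1 hz
  have hD0 : (0:ℝ) ≤ dist z z₀ := dist_nonneg
  rw [le_div_iff₀ (by linarith : (0:ℝ) < R - dist z z₀)]
  have hqR : ‖φ z‖ * R ≤ dist z z₀ := by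
    calc ‖φ z‖ * R ≤ (1 / R * dist z z₀) * R := by gcongr
      _ = dist z z₀ := by field_simp
  have f1 := mul_le_mul_of_nonneg_left hnq hR.le
  have f2 := mul_le_mul_of_nonneg_left hqR (norm_nonneg (h z))
  have f3 := mul_le_mul_of_nonneg_left hqR (by linarith : (0:ℝ) ≤ 2 * A)
  nlinarith [f1, f2, f3, norm_nonneg (h z), norm_nonneg (φ z)]

set_option maxHeartbeats 1000000 in
/-- Landau/Borel–Carathéodory bound for the logarithmic derivative in a strip. -/
lemma strip_bound {n : ℕ} {Z : ℂ → ℂ} {ρ c₀ d u₁ K : ℝ}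
    (hZ : AnalyticOnNhd ℂ Z Set.univ)
    (hc₀ : ρ + 1 ≤ c₀) (hd : 0 < d) (hK : 0 < K)
    (hu₁ : 0 < u₁) (hu₁' : u₁ ≤ (c₀ - ρ) / 2)
    (hgrow : ∀ σ t : ℝ, ρ ≤ σ → σ ≤ 2 * c₀ - ρ →
      ‖Z (σ + t * I)‖ ≤ Real.exp (K * (1 + |t|) ^ (n - 1)))
    (hline : ∀ s : ℂ, 0 < s.im → Z s = 0 → s.re = ρ)
    (hlow : ∀ t : ℝ, 1 ≤ t → d ≤ ‖Z (c₀ + t * I)‖) :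
    ∃ C > (0:ℝ), ∃ T₀ ≥ (1:ℝ), ∀ w : ℂ, ρ + u₁ ≤ w.re → w.re ≤ c₀ → T₀ ≤ w.im →
      ‖logDeriv Z w‖ ≤ C * w.im ^ (n - 1) := by
  have hc : (1:ℝ) ≤ c₀ - ρ := by linarith
  set c : ℝ := c₀ - ρ with hcdef
  set R₁ : ℝ := c - u₁ with hR₁def
  set r₂ : ℝ := c - 3 * u₁ / 4 with hr₂def
  set R₂ : ℝ := c - u₁ / 2 with hR₂def
  set R₃ : ℝ := c - u₁ / 4 with hR₃def
  have hR₁pos : 0 < R₁ := by rw [hR₁def]; linarith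
  have hR₁r₂ : R₁ < r₂ := by rw [hR₁def, hr₂def]; linarith
  have hr₂R₂ : r₂ < R₂ := by rw [hr₂def, hR₂def]; linarith
  have hR₂R₃ : R₂ < R₃ := by rw [hR₂def, hR₃def]; linarith
  have hR₃c : R₃ < c := by rw [hR₃def]; linarith
  set Cgrow : ℝ := K * (2 + R₃) ^ (n - 1) + |Real.log d| + 1 with hCgrowdef
  have hR₃pos : 0 < R₃ := by linarith
  have hCgrowpos : 0 < Cgrow := by
    have h1 : 0 < K * (2 + R₃) ^ (n - 1) := mul_pos hK (pow_pos (by linarith) _)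
    have h2 := abs_nonneg (Real.log d)
    rw [hCgrowdef]; linarith
  set Cfin : ℝ := 4 / u₁ * (16 * r₂ / u₁ * Cgrow + 1) with hCfindef
  have hr₂pos : 0 < r₂ := lt_trans hR₁pos hR₁r₂
  have hCfinpos : 0 < Cfin := by rw [hCfindef]; positivity
  refine ⟨Cfin, hCfinpos, R₃ + 1, by linarith, ?_⟩
  intro w hw₁ hw₂ hwT
  set T : ℝ := w.im with hTdef
  have hT1 : 1 ≤ T := by linarith
  set z₀ : ℂ := (c₀ : ℂ) + (T : ℂ) * I with hz₀def
  have hz₀re : z₀.re = c₀ := by simp [hz₀def]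
  have hz₀im : z₀.im = T := by simp [hz₀def]
  -- basic facts about the ball of radius R₃
  have hball : ∀ z ∈ ball z₀ R₃, ρ < z.re ∧ 0 < z.im ∧ ρ ≤ z.re ∧ z.re ≤ 2 * c₀ - ρ ∧
      |z.im| ≤ T + R₃ := by
    intro z hz
    have hzd : ‖z - z₀‖ < R₃ := by
      rw [← Complex.dist_eq]; exact mem_ball.1 hz
    have hre : |z.re - c₀| < R₃ := by
      have := Complex.abs_re_le_norm (z - z₀)
      simp only [Complex.sub_re, hz₀re] at this
      linarith
    have him : |z.im - T| < R₃ := by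
      have := Complex.abs_im_le_norm (z - z₀)
      simp only [Complex.sub_im, hz₀im] at this
      linarith
    rw [abs_lt] at hre
    rw [abs_lt] at him
    refine ⟨by linarith, by linarith, by linarith, by linarith, ?_⟩
    rw [abs_le]
    constructor <;> linarith
  have hZ0 : ∀ z ∈ ball z₀ R₃, Z z ≠ 0 := by
    intro z hz h0
    have := hline z (hball z hz).2.1 h0
    exact absurd this (ne_of_gt (hball z hz).1)
  obtain ⟨h, hhz₀, hhd, hhexp⟩ := exists_log_s8 hZ hZ0
  -- real part identity
  have hre_eq : ∀ z ∈ ball z₀ R₃, (h z).re = Real.log (‖Z z‖) := by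
    intro z hz
    have : ‖Z z‖ = Real.exp ((h z).re) := by
      rw [← hhexp z hz, Complex.norm_exp]
    rw [this, Real.log_exp]
  have hz₀mem : z₀ ∈ ball z₀ R₃ := mem_ball_self (by positivity)
  -- the normalized function
  set g : ℂ → ℂ := fun z => h z - h z₀ with hgdef
  set A : ℝ := max (K * (1 + (T + R₃)) ^ (n - 1) - Real.log d) 0 + 1 with hAdef
  have hApos : 0 < A := by rw [hAdef]; positivity
  have hgre : ∀ z ∈ ball z₀ R₂, (g z).re < A := by
    intro z hz
    have hz₃ : z ∈ ball z₀ R₃ := ball_subset_ball hR₂R₃.le hz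
    obtain ⟨h1, h2, h3, h4, h5⟩ := hball z hz₃
    have hup : (h z).re ≤ K * (1 + (T + R₃)) ^ (n - 1) := by
      rw [hre_eq z hz₃]
      have habs : 0 < ‖Z z‖ := by
        rw [norm_pos_iff]; exact hZ0 z hz₃
      rw [Real.log_le_iff_le_exp habs]
      have := hgrow z.re z.im h3 h4
      rw [Complex.re_add_im] at this
      refine le_trans this ?_
      rw [Real.exp_le_exp]
      have h1T : (0:ℝ) ≤ 1 + |z.im| := by positivity
      have : (1 + |z.im|) ^ (n-1) ≤ (1 + (T + R₃)) ^ (n-1) := by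
        refine pow_le_pow_left₀ h1T (by linarith) _
      nlinarith
    have hlo : Real.log d ≤ (h z₀).re := by
      rw [hre_eq z₀ hz₀mem]
      have := hlow T hT1
      exact Real.log_le_log hd (by rw [hz₀def]; exact this)
    have : (g z).re = (h z).re - (h z₀).re := by simp [hgdef]
    rw [this, hAdef]
    have : (h z).re - (h z₀).re ≤ K * (1 + (T + R₃)) ^ (n - 1) - Real.log d := by linarith
    have h6 := le_max_left (K * (1 + (T + R₃)) ^ (n - 1) - Real.log d) (0:ℝ)
    linarith
  have hgd : DifferentiableOn ℂ g (ball z₀ R₂) := by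
    intro z hz
    have hz₃ : z ∈ ball z₀ R₃ := ball_subset_ball hR₂R₃.le hz
    exact (((hhd z hz₃).sub_const (h z₀)).differentiableAt).differentiableWithinAt
  have hg0 : g z₀ = 0 := by simp [hgdef]
  have hbc := bc_sup (lt_trans hr₂pos hr₂R₂) hApos hgd hg0 hgre
  -- sup bound M on ball z₀ r₂
  set M : ℝ := 2 * A * r₂ / (R₂ - r₂) with hMdef
  have hMpos : 0 < M := by
    rw [hMdef]
    have : 0 < R₂ - r₂ := by linarith
    positivity
  have hsup : ∀ z ∈ ball z₀ r₂, ‖g z‖ ≤ M := by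
    intro z hz
    have hzR₂ : z ∈ ball z₀ R₂ := ball_subset_ball hr₂R₂.le hz
    have hD : dist z z₀ < r₂ := mem_ball.1 hz
    have hD0 : (0:ℝ) ≤ dist z z₀ := dist_nonneg
    refine le_trans (hbc z hzR₂) ?_
    rw [hMdef, div_le_div_iff₀ (by linarith) (by linarith)]
    nlinarith [mul_nonneg (mul_nonneg (by linarith : (0:ℝ) ≤ 2 * A) (by linarith : (0:ℝ) ≤ R₂))
      (by linarith : (0:ℝ) ≤ r₂ - dist z z₀)]
  -- w is within R₁ of z₀
  have hwz₀ : dist w z₀ ≤ R₁ := by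
    have : w - z₀ = ((w.re - c₀ : ℝ) : ℂ) := by
      simp [hz₀def, Complex.ext_iff, hTdef]
    rw [Complex.dist_eq, this, Complex.norm_real, Real.norm_eq_abs, abs_le]
    constructor <;> linarith
  set δ : ℝ := r₂ - R₁ with hδdef
  have hδpos : 0 < δ := by rw [hδdef]; linarith
  have hδball : ball w δ ⊆ ball z₀ r₂ := by
    intro z hz
    rw [mem_ball] at hz ⊢
    calc dist z z₀ ≤ dist z w + dist w z₀ := dist_triangle z w z₀
      _ < δ + R₁ := by exact add_lt_add_of_lt_of_le hz hwz₀
      _ = r₂ := by rw [hδdef]; ring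
  have hwmem : w ∈ ball z₀ r₂ := hδball (mem_ball_self hδpos)
  have hmaps : Set.MapsTo g (ball w δ) (ball (g w) (2 * M + 1)) := by
    intro z hz
    rw [mem_ball, dist_eq_norm]
    calc ‖g z - g w‖ ≤ ‖g z‖ + ‖g w‖ := norm_sub_le _ _
      _ ≤ M + M := add_le_add (hsup z (hδball hz)) (hsup w hwmem)
      _ < 2 * M + 1 := by linarith
  have hgdδ : DifferentiableOn ℂ g (ball w δ) :=
    hgd.mono (subset_trans hδball (ball_subset_ball hr₂R₂.le))
  have hderiv := Complex.norm_deriv_le_div_of_mapsTo_ball hgdδ (hmaps.mono_right ball_subset_closedBall) hδpos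
  -- identify deriv g w with logDeriv Z w
  have hwR₃ : w ∈ ball z₀ R₃ := by
    rw [mem_ball]
    calc dist w z₀ ≤ R₁ := hwz₀
      _ < R₃ := by linarith
  have hgw : deriv g w = logDeriv Z w := by
    have : HasDerivAt g (logDeriv Z w) w := (hhd w hwR₃).sub_const (h z₀)
    exact this.deriv
  rw [hgw] at hderiv
  refine le_trans hderiv ?_
  -- final numeric estimate
  have hpow1 : (1:ℝ) ≤ T ^ (n - 1) := one_le_pow₀ hT1
  have hAC : A ≤ Cgrow * T ^ (n - 1) := by
    have hmaxle : max (K * (1 + (T + R₃)) ^ (n - 1) - Real.log d) 0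
        ≤ K * (1 + (T + R₃)) ^ (n - 1) + |Real.log d| := by
      have h1 : K * (1 + (T + R₃)) ^ (n - 1) - Real.log d
          ≤ K * (1 + (T + R₃)) ^ (n - 1) + |Real.log d| := by
        have := neg_abs_le (Real.log d)
        linarith
      have h2 : (0:ℝ) ≤ K * (1 + (T + R₃)) ^ (n - 1) + |Real.log d| := by positivity
      exact max_le h1 h2
    have hpowle : (1 + (T + R₃)) ^ (n - 1) ≤ (2 + R₃) ^ (n - 1) * T ^ (n - 1) := by
      rw [← mul_pow]
      refine pow_le_pow_left₀ (by positivity) ?_ _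
      nlinarith
    rw [hAdef, hCgrowdef]
    have hKp := mul_le_mul_of_nonneg_left hpowle hK.le
    have habs : |Real.log d| ≤ |Real.log d| * T ^ (n - 1) := le_mul_of_one_le_right (abs_nonneg _) hpow1
    nlinarith
  have hδeq : δ = u₁ / 4 := by rw [hδdef, hr₂def, hR₁def]; ring
  have hR₂r₂ : R₂ - r₂ = u₁ / 4 := by rw [hR₂def, hr₂def]; ring
  have hMeq : M = 8 * A * r₂ / u₁ := by
    rw [hMdef, hR₂r₂]
    field_simp
    ring
  rw [hδeq, hMeq, hCfindef]
  rw [div_le_iff₀ (by positivity : (0:ℝ) < u₁ / 4)]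
  have hexpand : 4 / u₁ * (16 * r₂ / u₁ * Cgrow + 1) * T ^ (n-1) * (u₁ / 4)
      = 16 * r₂ * (Cgrow * T ^ (n-1)) / u₁ + T ^ (n-1) := by
    field_simp
  have hlhs : 2 * (8 * A * r₂ / u₁) + 1 = 16 * r₂ * A / u₁ + 1 := by ring
  rw [hexpand, hlhs]
  have h2 : 16 * r₂ * A / u₁ ≤ 16 * r₂ * (Cgrow * T ^ (n-1)) / u₁ := by
    gcongr
  linarith

/-- Bound for the log-derivative in the whole region right of `Re = ρ + u`. -/
lemma halfplane_bound {n : ℕ} {Z : ℂ → ℂ} {ρ c₀ d u B K : ℝ}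
    (hZ : AnalyticOnNhd ℂ Z Set.univ) (hc₀ : ρ + 1 ≤ c₀) (hd : 0 < d) (hK : 0 < K)
    (hu : 0 < u) (hB : 0 < B)
    (hgrow : ∀ σ t : ℝ, ρ ≤ σ → σ ≤ 2 * c₀ - ρ →
      ‖Z (σ + t * I)‖ ≤ Real.exp (K * (1 + |t|) ^ (n - 1)))
    (hline : ∀ s : ℂ, 0 < s.im → Z s = 0 → s.re = ρ)
    (hlow : ∀ t : ℝ, 1 ≤ t → d ≤ ‖Z (c₀ + t * I)‖)
    (hright : ∀ s : ℂ, c₀ ≤ s.re → 1 ≤ s.im → ‖deriv Z s / Z s‖ ≤ B) :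
    ∃ C > (0:ℝ), ∃ T₀ ≥ (1:ℝ), ∀ w : ℂ, ρ + u ≤ w.re → T₀ ≤ w.im →
      ‖logDeriv Z w‖ ≤ C * w.im ^ (n - 1) := by
  have hcρ : 0 < (c₀ - ρ) / 2 := by linarith
  set u₁ : ℝ := min u ((c₀ - ρ) / 2) with hu₁def
  have hu₁ : 0 < u₁ := lt_min hu hcρ
  have hu₁' : u₁ ≤ (c₀ - ρ) / 2 := min_le_right _ _
  have hu₁u : u₁ ≤ u := min_le_left _ _
  obtain ⟨C, hC, T₀, hT₀, hstrip⟩ :=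
    strip_bound hZ hc₀ hd hK hu₁ hu₁' hgrow hline hlow
  refine ⟨C + B, by linarith, T₀, hT₀, ?_⟩
  intro w hw hwT
  have hT1 : 1 ≤ w.im := le_trans hT₀ hwT
  have hTp1 : (1:ℝ) ≤ w.im ^ (n - 1) := one_le_pow₀ hT1
  have hTp0 : (0:ℝ) < w.im ^ (n - 1) := by linarith
  by_cases hcase : w.re ≤ c₀
  · refine le_trans (hstrip w (by linarith) hcase hwT) ?_
    nlinarith
  · have hb := hright w (by linarith) hT1
    rw [logDeriv_apply]
    calc ‖deriv Z w / Z w‖ ≤ B := hb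
      _ ≤ B * w.im ^ (n - 1) := le_mul_of_one_le_right hB.le hTp1
      _ ≤ (C + B) * w.im ^ (n - 1) := by nlinarith

/-- Theorem 4.1(b) in abstract form: for a finite alternating product
`F(s) = ∏ₖ (Z_{k,1}(s+aₖ)/Z_{k,2}(s+aₖ))^{εₖ}` of shifted Selberg-type quotients, one has
`|F'(s)/F(s)| = O(t^{n-1})` for `s = σ + it` with `ρ + u ≤ σ ≤ t/2 + ρ` and `t` large. -/
theorem logDeriv_ruelle_type_bound (n : ℕ) (hn : 2 ≤ n) (ρ u c₀ : ℝ) (hu : 0 < u)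
    (hc₀ : ρ + 1 ≤ c₀) (m : ℕ) (hm : 1 ≤ m)
    (a : Fin m → ℝ) (ha : ∀ k, 0 ≤ a k)
    (ε : Fin m → ℤ) (hε : ∀ k, ε k = 1 ∨ ε k = -1)
    (d B : Fin m → ℝ) (C : Fin m → ℝ) (hd : ∀ k, 0 < d k) (hB : ∀ k, 0 < B k)
    (Z₁ Z₂ : Fin m → ℂ → ℂ)
    (hZ₁ : ∀ k, AnalyticOnNhd ℂ (Z₁ k) Set.univ)
    (hZ₂ : ∀ k, AnalyticOnNhd ℂ (Z₂ k) Set.univ)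
    (hZ₁ne : ∀ k, ∃ z, Z₁ k z ≠ 0) (hZ₂ne : ∀ k, ∃ z, Z₂ k z ≠ 0)
    (hgrowth : ∀ k, ∀ a' b' : ℝ, a' < b' → ∃ K > (0 : ℝ), ∀ σ t : ℝ, a' ≤ σ → σ ≤ b' →
      ‖Z₁ k (σ + t * I)‖ ≤ Real.exp (K * (1 + |t|) ^ (n - 1)) ∧
      ‖Z₂ k (σ + t * I)‖ ≤ Real.exp (K * (1 + |t|) ^ (n - 1)))
    (hline : ∀ k, ∀ s : ℂ, 0 < s.im → (Z₁ k s = 0 ∨ Z₂ k s = 0) → s.re = ρ)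
    (N : Fin m → ℝ → ℝ)
    (hNdef : ∀ k, ∀ t : ℝ, N k t =
      ∑ᶠ s ∈ {s : ℂ | 0 < s.im ∧ s.im ≤ t ∧ (Z₁ k s = 0 ∨ Z₂ k s = 0)},
        ((zeroOrder (Z₁ k) s + zeroOrder (Z₂ k) s : ℕ) : ℝ))
    (hN : ∀ k, (fun t : ℝ => N k t - C k * t ^ n) =O[atTop] fun t : ℝ => t ^ (n - 1))
    (hlow : ∀ k, ∀ t : ℝ, 1 ≤ t →
      d k ≤ ‖Z₁ k (c₀ + t * I)‖ ∧ d k ≤ ‖Z₂ k (c₀ + t * I)‖)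
    (hright : ∀ k, ∀ s : ℂ, c₀ ≤ s.re → 1 ≤ s.im →
      Z₁ k s ≠ 0 ∧ Z₂ k s ≠ 0 ∧
      ‖deriv (Z₁ k) s / Z₁ k s‖ ≤ B k ∧
      ‖deriv (Z₂ k) s / Z₂ k s‖ ≤ B k)
    (F : ℂ → ℂ)
    (hF : ∀ s : ℂ, F s = ∏ k : Fin m, (Z₁ k (s + a k) / Z₂ k (s + a k)) ^ ε k) :
    ∃ C' > (0 : ℝ), ∃ t₀ > (0 : ℝ), ∀ σ t : ℝ, t₀ ≤ t → ρ + u ≤ σ → σ ≤ t / 2 + ρ →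
      ‖deriv F (σ + t * I) / F (σ + t * I)‖ ≤ C' * t ^ (n - 1) := by
  have hFeq : F = fun s => ∏ k : Fin m, (Z₁ k (s + a k) / Z₂ k (s + a k)) ^ ε k := funext hF
  subst hFeq
  -- growth constants on the strip [ρ, 2c₀ - ρ]
  choose K hKpos hKbound using fun k => hgrowth k ρ (2 * c₀ - ρ) (by linarith)
  -- bounds for each Z₁ k
  have h1 : ∀ k, ∃ C > (0:ℝ), ∃ T₀ ≥ (1:ℝ), ∀ w : ℂ, ρ + u ≤ w.re → T₀ ≤ w.im →
      ‖logDeriv (Z₁ k) w‖ ≤ C * w.im ^ (n - 1) := by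
    intro k
    exact halfplane_bound (hZ₁ k) hc₀ (hd k) (hKpos k) hu (hB k)
      (fun σ t h1 h2 => (hKbound k σ t h1 h2).1)
      (fun s him h0 => hline k s him (Or.inl h0))
      (fun t ht => (hlow k t ht).1)
      (fun s h1 h2 => (hright k s h1 h2).2.2.1)
  have h2 : ∀ k, ∃ C > (0:ℝ), ∃ T₀ ≥ (1:ℝ), ∀ w : ℂ, ρ + u ≤ w.re → T₀ ≤ w.im →
      ‖logDeriv (Z₂ k) w‖ ≤ C * w.im ^ (n - 1) := by
    intro k
    exact halfplane_bound (hZ₂ k) hc₀ (hd k) (hKpos k) hu (hB k)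
      (fun σ t h1 h2 => (hKbound k σ t h1 h2).2)
      (fun s him h0 => hline k s him (Or.inr h0))
      (fun t ht => (hlow k t ht).2)
      (fun s h1 h2 => (hright k s h1 h2).2.2.2)
  choose C₁ hC₁ T₁ hT₁ hbound₁ using h1
  choose C₂ hC₂ T₂ hT₂ hbound₂ using h2
  haveI hne : Nonempty (Fin m) := ⟨⟨0, hm⟩⟩
  refine ⟨∑ k : Fin m, (C₁ k + C₂ k), ?_, ∑ k : Fin m, (T₁ k + T₂ k), ?_, ?_⟩
  · refine Finset.sum_pos (fun k _ => by linarith [hC₁ k, hC₂ k]) Finset.univ_nonempty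
  · refine lt_of_lt_of_le zero_lt_one ?_
    obtain ⟨k₀⟩ := hne
    calc (1:ℝ) ≤ T₁ k₀ + T₂ k₀ := by linarith [hT₁ k₀, hT₂ k₀]
      _ ≤ ∑ k : Fin m, (T₁ k + T₂ k) := by
          refine Finset.single_le_sum (f := fun j => T₁ j + T₂ j)
            (fun j _ => by show (0:ℝ) ≤ T₁ j + T₂ j; linarith [hT₁ j, hT₂ j])
            (Finset.mem_univ k₀)
  intro σ t ht hσ hσ'
  set s : ℂ := (σ:ℂ) + (t:ℂ) * I with hsdef
  have hsre : s.re = σ := by simp [hsdef]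
  have hsim : s.im = t := by simp [hsdef]
  have htk : ∀ k, T₁ k ≤ t ∧ T₂ k ≤ t := by
    intro k
    have hle : T₁ k + T₂ k ≤ ∑ j : Fin m, (T₁ j + T₂ j) :=
      Finset.single_le_sum (f := fun j => T₁ j + T₂ j)
        (fun j _ => by show (0:ℝ) ≤ T₁ j + T₂ j; linarith [hT₁ j, hT₂ j])
        (Finset.mem_univ k)
    constructor <;> [linarith [hT₂ k]; linarith [hT₁ k]]
  have ht1 : (1:ℝ) ≤ t := by
    obtain ⟨k₀⟩ := hne
    have := (htk k₀).1
    linarith [hT₁ k₀]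
  -- properties of the shifted points
  have hwre : ∀ k : Fin m, (s + (a k : ℂ)).re = σ + a k := by intro k; simp [hsdef]
  have hwim : ∀ k : Fin m, (s + (a k : ℂ)).im = t := by intro k; simp [hsdef]
  have hw₁ : ∀ k : Fin m, ρ + u ≤ (s + (a k : ℂ)).re := by
    intro k; rw [hwre k]; linarith [ha k]
  have hZ₁ne0 : ∀ k : Fin m, Z₁ k (s + (a k : ℂ)) ≠ 0 := by
    intro k h0
    have him : 0 < (s + (a k : ℂ)).im := by rw [hwim k]; linarith
    have := hline k _ him (Or.inl h0)
    rw [hwre k] at this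
    linarith [ha k]
  have hZ₂ne0 : ∀ k : Fin m, Z₂ k (s + (a k : ℂ)) ≠ 0 := by
    intro k h0
    have him : 0 < (s + (a k : ℂ)).im := by rw [hwim k]; linarith
    have := hline k _ him (Or.inr h0)
    rw [hwre k] at this
    linarith [ha k]
  -- differentiability of the quotients
  have hQdiff : ∀ k : Fin m,
      DifferentiableAt ℂ (fun z => Z₁ k (z + (a k : ℂ)) / Z₂ k (z + (a k : ℂ))) s := by
    intro k
    have hd1 : DifferentiableAt ℂ (fun z => Z₁ k (z + (a k : ℂ))) s := by
      have := ((hZ₁ k) (s + (a k : ℂ)) (Set.mem_univ _)).differentiableAt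
      exact this.comp s ((differentiableAt_id).add_const _)
    have hd2 : DifferentiableAt ℂ (fun z => Z₂ k (z + (a k : ℂ))) s := by
      have := ((hZ₂ k) (s + (a k : ℂ)) (Set.mem_univ _)).differentiableAt
      exact this.comp s ((differentiableAt_id).add_const _)
    exact hd1.div hd2 (hZ₂ne0 k)
  have hQne : ∀ k : Fin m, Z₁ k (s + (a k : ℂ)) / Z₂ k (s + (a k : ℂ)) ≠ 0 :=
    fun k => div_ne_zero (hZ₁ne0 k) (hZ₂ne0 k)
  -- compute the log derivative of the product
  have hprod : logDeriv (fun z => ∏ k : Fin m, (Z₁ k (z + a k) / Z₂ k (z + a k)) ^ ε k) s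
      = ∑ k : Fin m, (ε k : ℂ) *
        (logDeriv (Z₁ k) (s + a k) - logDeriv (Z₂ k) (s + a k)) := by
    rw [logDeriv_prod]
    · congr 1
      ext k
      rw [logDeriv_fun_zpow (hQdiff k)]
      congr 1
      have hshift : ∀ (W : ℂ → ℂ), DifferentiableAt ℂ W (s + (a k : ℂ)) →
          logDeriv (fun z => W (z + (a k : ℂ))) s = logDeriv W (s + (a k : ℂ)) := by
        intro W hW
        have hcomp := logDeriv_comp (x := s) (f := W) (g := fun z => z + (a k : ℂ)) hW
          ((differentiableAt_id).add_const _)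
        simp only [Function.comp_def] at hcomp
        have hder : deriv (fun z : ℂ => z + (a k : ℂ)) s = 1 := by
          simpa using ((hasDerivAt_id s).add_const ((a k : ℂ))).deriv
        rw [hcomp, hder, mul_one]
      rw [logDeriv_div s (hZ₁ne0 k) (hZ₂ne0 k)
        (by have := ((hZ₁ k) (s + (a k : ℂ)) (Set.mem_univ _)).differentiableAt
            exact this.comp s ((differentiableAt_id).add_const _))
        (by have := ((hZ₂ k) (s + (a k : ℂ)) (Set.mem_univ _)).differentiableAt
            exact this.comp s ((differentiableAt_id).add_const _))]
      rw [hshift (Z₁ k) (((hZ₁ k) _ (Set.mem_univ _)).differentiableAt),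
        hshift (Z₂ k) (((hZ₂ k) _ (Set.mem_univ _)).differentiableAt)]
    · intro k _
      exact zpow_ne_zero _ (hQne k)
    · intro k _
      exact (hQdiff k).zpow (Or.inl (hQne k))
  have habs : ‖deriv (fun z => ∏ k : Fin m, (Z₁ k (z + a k) / Z₂ k (z + a k)) ^ ε k) s /
      (∏ k : Fin m, (Z₁ k (s + a k) / Z₂ k (s + a k)) ^ ε k)‖ =
      ‖logDeriv (fun z => ∏ k : Fin m, (Z₁ k (z + a k) / Z₂ k (z + a k)) ^ ε k) s‖ := rfl
  rw [habs, hprod]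
  -- final estimate
  have htp : (0:ℝ) < t ^ (n-1) := by positivity
  calc ‖∑ k : Fin m, (ε k : ℂ) *
        (logDeriv (Z₁ k) (s + a k) - logDeriv (Z₂ k) (s + a k))‖
      ≤ ∑ k : Fin m, ‖(ε k : ℂ) *
        (logDeriv (Z₁ k) (s + a k) - logDeriv (Z₂ k) (s + a k))‖ := by
        exact norm_sum_le _ _
    _ ≤ ∑ k : Fin m, (C₁ k + C₂ k) * t ^ (n-1) := by
        refine Finset.sum_le_sum (fun k _ => ?_)
        rw [norm_mul]
        have hεabs : ‖(ε k : ℂ)‖ = 1 := by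
          rcases hε k with h | h <;> rw [h] <;> simp
        rw [hεabs, one_mul]
        have hb1 := hbound₁ k (s + (a k : ℂ)) (hw₁ k) (by rw [hwim k]; exact (htk k).1)
        have hb2 := hbound₂ k (s + (a k : ℂ)) (hw₁ k) (by rw [hwim k]; exact (htk k).2)
        rw [hwim k] at hb1 hb2
        calc ‖logDeriv (Z₁ k) (s + a k) - logDeriv (Z₂ k) (s + a k)‖
            ≤ ‖logDeriv (Z₁ k) (s + a k)‖ +
              ‖logDeriv (Z₂ k) (s + a k)‖ := by
              exact norm_sub_le _ _
          _ ≤ C₁ k * t ^ (n-1) + C₂ k * t ^ (n-1) := add_le_add hb1 hb2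
          _ = (C₁ k + C₂ k) * t ^ (n-1) := by ring
    _ = (∑ k : Fin m, (C₁ k + C₂ k)) * t ^ (n-1) := by rw [Finset.sum_mul]
end
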